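/- With the setup of the previous lemma, for odd powers: F^{2k+1}((ε1∧ε2)^{⊗n}) = k! · Σ_{1≤i1<⋯<ik≤n} Σ_{j ∉ {i1,…,ik}} (⊗_{t=1}^n w_t), where w_t = ε1∧ε2̄ if t ∈ {i1,…,ik}, w_t = ε1∧ε0 if t = j, and w_t = ε1∧ε2 otherwise. -/
import Mathlib


open Finsupp

/-- Koszul sign. -/
noncomputable def koszulSign {ι : Type*} (par : ι → ZMod 2) {n : ℕ}
    (x : Fin n → ι) (p : Fin n) : ℂ :=
  (-1 : ℂ) ^ (∑ i ∈ Finset.Iio p, (par (x i)).val)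

/-- Signed action of an operator `f` on the `p`-th factor of a tensor power. -/
noncomputable def signedFactorAction {ι : Type*} [DecidableEq ι]
    (par : ι → ZMod 2) (f : ι → (ι →₀ ℂ)) {n : ℕ} (p : Fin n) :
    ((Fin n → ι) →₀ ℂ) →ₗ[ℂ] ((Fin n → ι) →₀ ℂ) :=
  Finsupp.lsum ℂ fun x => LinearMap.toSpanSingleton ℂ _
    (koszulSign par x p •
      (f (x p)).sum fun j c => Finsupp.single (Function.update x p j) c)

/-- Parities of the basis `u0 = ε1∧ε2` (even), `u1 = ε1∧ε0` (odd), `u2 = ε1∧ε2̄` (even)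
of the 3-dimensional superspace `U`. -/
def par3 : Fin 3 → ZMod 2 := ![0, 1, 0]

/-- The odd operator `f2` on `U`: `u0 ↦ u1 ↦ u2 ↦ 0`. -/
noncomputable def fmap : Fin 3 → (Fin 3 →₀ ℂ) :=
  ![Finsupp.single 1 1, Finsupp.single 2 1, 0]

lemma sfa_single {n : ℕ} (p : Fin n) (x : Fin n → Fin 3) :
    signedFactorAction par3 fmap p (Finsupp.single x 1) =
      koszulSign par3 x p •
        (fmap (x p)).sum fun j c => Finsupp.single (Function.update x p j) c := by
  rw [signedFactorAction, Finsupp.lsum_single, LinearMap.toSpanSingleton_apply, one_smul]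

lemma sfa_zero {n : ℕ} (p : Fin n) (x : Fin n → Fin 3) (h : x p = 0) :
    signedFactorAction par3 fmap p (Finsupp.single x 1) =
      koszulSign par3 x p • Finsupp.single (Function.update x p 1) 1 := by
  rw [sfa_single, h]
  congr 1
  rw [show fmap 0 = Finsupp.single 1 1 by simp [fmap]]
  rw [Finsupp.sum_single_index (by simp)]

lemma sfa_one {n : ℕ} (p : Fin n) (x : Fin n → Fin 3) (h : x p = 1) :
    signedFactorAction par3 fmap p (Finsupp.single x 1) =
      koszulSign par3 x p • Finsupp.single (Function.update x p 2) 1 := by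
  rw [sfa_single, h]
  congr 1
  rw [show fmap 1 = Finsupp.single 2 1 by simp [fmap]]
  rw [Finsupp.sum_single_index (by simp)]

lemma sfa_two {n : ℕ} (p : Fin n) (x : Fin n → Fin 3) (h : x p = 2) :
    signedFactorAction par3 fmap p (Finsupp.single x 1) = 0 := by
  rw [sfa_single, h]
  rw [show fmap 2 = 0 by simp [fmap]]
  simp

def vfun {n : ℕ} (s : Finset (Fin n)) : Fin n → Fin 3 := fun t => if t ∈ s then 2 else 0
def wfun {n : ℕ} (s : Finset (Fin n)) (j : Fin n) : Fin n → Fin 3 :=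
  fun t => if t ∈ s then 2 else if t = j then 1 else 0
def wfun2 {n : ℕ} (s : Finset (Fin n)) (j p : Fin n) : Fin n → Fin 3 :=
  fun t => if t ∈ s then 2 else if t = j ∨ t = p then 1 else 0

lemma ks_v {n : ℕ} (s : Finset (Fin n)) (p : Fin n) : koszulSign par3 (vfun s) p = 1 := by
  rw [koszulSign, Finset.sum_eq_zero, pow_zero]
  intro i _
  by_cases h : i ∈ s <;> simp [vfun, h, par3]

lemma ks_w {n : ℕ} (s : Finset (Fin n)) (j : Fin n) (hj : j ∉ s) (p : Fin n) :
    koszulSign par3 (wfun s j) p = if j < p then -1 else 1 := by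
  rw [koszulSign]
  have : ∀ i, (par3 (wfun s j i)).val = if i = j then 1 else 0 := by
    intro i
    rcases eq_or_ne i j with rfl | h
    · simp [wfun, hj, par3]; decide
    · by_cases hi : i ∈ s <;> simp [wfun, hi, h, par3]
  rw [Finset.sum_congr rfl fun i _ => this i, Finset.sum_ite_eq' _ j]
  by_cases h : j < p <;> simp [h, Finset.mem_Iio]

lemma upd_v {n : ℕ} (s : Finset (Fin n)) (p : Fin n) (hp : p ∉ s) :
    Function.update (vfun s) p 1 = wfun s p := by
  funext t
  rcases eq_or_ne t p with rfl | h
  · simp [Function.update, wfun, hp]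
  · simp [Function.update, h, vfun, wfun]

lemma upd_w2 {n : ℕ} (s : Finset (Fin n)) (j : Fin n) (hj : j ∉ s) :
    Function.update (wfun s j) j 2 = vfun (insert j s) := by
  funext t
  rcases eq_or_ne t j with rfl | h
  · simp [Function.update, vfun]
  · simp [Function.update, h, vfun, wfun, Finset.mem_insert]

lemma upd_w1 {n : ℕ} (s : Finset (Fin n)) (j p : Fin n) (hp : p ∉ s) (hpj : p ≠ j) :
    Function.update (wfun s j) p 1 = wfun2 s j p := by
  funext t
  rcases eq_or_ne t p with rfl | h
  · simp [Function.update, wfun2, hp]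
  · simp only [Function.update, dif_neg h, wfun, wfun2]
    by_cases ht : t ∈ s
    · simp [ht]
    · simp [ht, h]

lemma wfun2_symm {n : ℕ} (s : Finset (Fin n)) (j p : Fin n) : wfun2 s j p = wfun2 s p j := by
  funext t; simp [wfun2, or_comm]
open Finset in
lemma F_single_v {n : ℕ} (s : Finset (Fin n)) :
    (∑ p : Fin n, signedFactorAction par3 fmap p) (Finsupp.single (vfun s) 1)
      = ∑ j ∈ sᶜ, Finsupp.single (wfun s j) (1:ℂ) := by
  rw [LinearMap.sum_apply, ← Finset.sum_add_sum_compl s]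
  rw [Finset.sum_eq_zero (fun p hp => sfa_two p _ (by simp [vfun, hp])), zero_add]
  refine Finset.sum_congr rfl fun p hp => ?_
  have hp' := Finset.mem_compl.mp hp
  rw [sfa_zero p _ (by simp [vfun, hp']), ks_v, one_smul, upd_v s p hp']

open Finset in
lemma F_single_w {n : ℕ} (s : Finset (Fin n)) (j : Fin n) (hj : j ∉ s) :
    (∑ p : Fin n, signedFactorAction par3 fmap p) (Finsupp.single (wfun s j) 1)
      = Finsupp.single (vfun (insert j s)) 1 +
        ∑ p ∈ (insert j s)ᶜ, (if j < p then (-1:ℂ) else 1) • Finsupp.single (wfun2 s j p) 1 := by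
  rw [LinearMap.sum_apply, ← Finset.sum_add_sum_compl (insert j s)]
  congr 1
  · rw [Finset.sum_insert hj,
      Finset.sum_eq_zero (fun p hp => sfa_two p _ (by simp [wfun, hp])), add_zero,
      sfa_one j _ (by simp [wfun, hj]), ks_w s j hj, if_neg (lt_irrefl j), one_smul,
      upd_w2 s j hj]
  · refine Finset.sum_congr rfl fun p hp => ?_
    have hp' := Finset.mem_compl.mp hp
    have hps : p ∉ s := fun h => hp' (Finset.mem_insert_of_mem h)
    have hpj : p ≠ j := fun h => hp' (h ▸ Finset.mem_insert_self j s)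
    rw [sfa_zero p _ (by simp [wfun, hps, hpj]), ks_w s j hj, upd_w1 s j p hps hpj]

open Finset in
lemma cross_cancel {n : ℕ} (s : Finset (Fin n)) :
    ∑ j ∈ sᶜ, ∑ p ∈ (insert j s)ᶜ,
        (if j < p then (-1:ℂ) else 1) • Finsupp.single (wfun2 s j p) (1:ℂ) = 0 := by
  set g : Fin n → Fin n → ((Fin n → Fin 3) →₀ ℂ) := fun j p =>
    if j = p then 0 else (if j < p then (-1:ℂ) else 1) • Finsupp.single (wfun2 s j p) (1:ℂ)
    with hg
  have key : ∑ j ∈ sᶜ, ∑ p ∈ (insert j s)ᶜ,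
      (if j < p then (-1:ℂ) else 1) • Finsupp.single (wfun2 s j p) (1:ℂ)
      = ∑ j ∈ sᶜ, ∑ p ∈ sᶜ, g j p := by
    refine Finset.sum_congr rfl fun j hj => ?_
    rw [Finset.compl_insert]
    have hgj : g j j = 0 := by simp [hg]
    rw [← Finset.sum_erase (sᶜ) hgj]
    refine Finset.sum_congr rfl fun p hp => ?_
    have : j ≠ p := fun h => (Finset.mem_erase.mp hp).1 h.symm
    simp [hg, this]
  rw [key]
  set S := ∑ j ∈ sᶜ, ∑ p ∈ sᶜ, g j p with hS
  have hanti : ∀ j p, g p j = -g j p := by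
    intro j p
    rcases eq_or_ne j p with rfl | h
    · simp [hg]
    · rcases lt_or_gt_of_ne h with hlt | hgt
      · rw [hg]; simp only [if_neg h.symm, if_neg h, if_neg (not_lt_of_gt hlt), if_pos hlt,
          wfun2_symm s p j]
        simp
      · rw [hg]; simp only [if_neg h.symm, if_neg h, if_pos hgt, if_neg (not_lt_of_gt hgt),
          wfun2_symm s p j]
        simp
  have hneg : S = -S := by
    rw [hS]
    conv_lhs => rw [Finset.sum_comm]
    rw [← Finset.sum_neg_distrib]
    refine Finset.sum_congr rfl fun j _ => ?_
    rw [← Finset.sum_neg_distrib]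
    exact Finset.sum_congr rfl fun p _ => hanti j p
  have h2 : (2:ℂ) • S = 0 := by
    rw [two_smul]; nth_rewrite 2 [hneg]; simp
  rcases smul_eq_zero.mp h2 with h | h
  · exact absurd h two_ne_zero
  · exact h

open Finset in
lemma F_w_sum {n : ℕ} (s : Finset (Fin n)) :
    (∑ p : Fin n, signedFactorAction par3 fmap p) (∑ j ∈ sᶜ, Finsupp.single (wfun s j) (1:ℂ))
      = ∑ j ∈ sᶜ, Finsupp.single (vfun (insert j s)) (1:ℂ) := by
  rw [map_sum]
  rw [Finset.sum_congr rfl fun j hj => F_single_w s j (Finset.mem_compl.mp hj)]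
  rw [Finset.sum_add_distrib, cross_cancel, add_zero]

open Finset in
lemma insert_count {n k : ℕ} :
    ∑ s ∈ Finset.powersetCard k (Finset.univ : Finset (Fin n)), ∑ j ∈ sᶜ,
        Finsupp.single (vfun (insert j s)) (1:ℂ)
      = ((k+1 : ℕ) : ℂ) • ∑ s ∈ Finset.powersetCard (k+1) (Finset.univ : Finset (Fin n)),
          Finsupp.single (vfun s) (1:ℂ) := by
  have rhs : ((k+1 : ℕ) : ℂ) • ∑ s ∈ Finset.powersetCard (k+1) (Finset.univ : Finset (Fin n)),
          Finsupp.single (vfun s) (1:ℂ)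
      = ∑ s ∈ Finset.powersetCard (k+1) (Finset.univ : Finset (Fin n)), ∑ j ∈ s,
          Finsupp.single (vfun s) (1:ℂ) := by
    rw [Finset.smul_sum]
    refine Finset.sum_congr rfl fun s hs => ?_
    rw [Finset.sum_const, (Finset.mem_powersetCard.mp hs).2, Nat.cast_smul_eq_nsmul]
  rw [rhs, Finset.sum_sigma', Finset.sum_sigma']
  refine Finset.sum_nbij' (fun x => ⟨insert x.2 x.1, x.2⟩) (fun x => ⟨x.1.erase x.2, x.2⟩)
    ?_ ?_ ?_ ?_ ?_
  · rintro ⟨t, j⟩ h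
    simp only [Finset.mem_sigma, Finset.mem_powersetCard_univ, Finset.mem_compl] at h
    simp only [Finset.mem_sigma, Finset.mem_powersetCard_univ, Finset.mem_insert_self,
      and_true]
    rw [Finset.card_insert_of_notMem h.2, h.1]
  · rintro ⟨t, j⟩ h
    simp only [Finset.mem_sigma, Finset.mem_powersetCard_univ] at h
    exact Finset.mem_sigma.mpr ⟨Finset.mem_powersetCard_univ.mpr
      (by rw [Finset.card_erase_of_mem h.2, h.1]; omega), Finset.mem_compl.mpr (Finset.notMem_erase _ _)⟩
  · rintro ⟨t, j⟩ h
    simp only [Finset.mem_sigma, Finset.mem_powersetCard_univ, Finset.mem_compl] at h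
    simp [Finset.erase_insert h.2]
  · rintro ⟨t, j⟩ h
    simp only [Finset.mem_sigma, Finset.mem_powersetCard_univ] at h
    simp [Finset.insert_erase h.2]
  · rintro ⟨t, j⟩ h
    rfl

open Finset in
lemma F_even {n : ℕ} (k : ℕ) :
    ((∑ p : Fin n, signedFactorAction par3 fmap p) ^ (2 * k))
        (Finsupp.single (fun _ => (0 : Fin 3)) 1)
      = (k.factorial : ℂ) • ∑ s ∈ Finset.powersetCard k (Finset.univ : Finset (Fin n)),
          Finsupp.single (vfun s) (1:ℂ) := by
  induction k with
  | zero =>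
    have hv : vfun (∅ : Finset (Fin n)) = fun _ => (0 : Fin 3) := by funext t; simp [vfun]
    simp [hv]
  | succ k ih =>
    have h2 : 2 * (k + 1) = (2 * k + 1) + 1 := by ring
    have hodd : 2 * k + 1 = 2 * k + 1 := rfl
    rw [h2, pow_succ', Module.End.mul_apply, pow_succ', Module.End.mul_apply, ih, map_smul,
      map_sum]
    rw [Finset.sum_congr rfl fun s _ => F_single_v s, map_smul, map_sum]
    rw [Finset.sum_congr rfl fun s _ => F_w_sum s, insert_count, smul_smul]
    congr 1
    push_cast [Nat.factorial_succ]
    ring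


/-- Lemma 5.3(ii): with `F = Σ_p f2^{(p)}` on `U^{⊗n}`, for odd powers
`F^{2k+1}((ε1∧ε2)^{⊗n}) = k! · Σ_{1≤i1<⋯<ik≤n} Σ_{j∉{i1,…,ik}} ⊗_t w_t`, where
`w_t = ε1∧ε2̄` for `t ∈ {i1,…,ik}`, `w_t = ε1∧ε0` for `t = j`, and `w_t = ε1∧ε2`
otherwise. -/
theorem F_odd_pow_apply (n k : ℕ) :
    ((∑ p : Fin n, signedFactorAction par3 fmap p) ^ (2 * k + 1))
        (Finsupp.single (fun _ => (0 : Fin 3)) 1)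
      = (k.factorial : ℂ) •
          ∑ s ∈ Finset.powersetCard k (Finset.univ : Finset (Fin n)),
            ∑ j ∈ sᶜ,
              Finsupp.single
                (fun t => if t ∈ s then (2 : Fin 3) else if t = j then 1 else 0)
                (1 : ℂ) := by
  rw [pow_succ', Module.End.mul_apply, F_even, map_smul, map_sum,
    Finset.sum_congr rfl fun s _ => F_single_v s]
  rfl
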